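/- In a relational monoid, if R(v,x,y) and R(w,x,ℓ y) hold, then ℓ v = ℓ w. -/
import Mathlib


/-- Relational associativity. -/
def RelAssoc {X : Type*} (R : X → X → X → Prop) : Prop :=
  ∀ u x y z : X, (∃ v, R u x v ∧ R v y z) ↔ (∃ v, R u v z ∧ R v x y)

/-- Definedness: `D R x y` iff the composite of `x` and `y` exists. -/
def D {X : Type*} (R : X → X → X → Prop) (x y : X) : Prop := ∃ z, R z x y

/-- Relational left unit. -/
def IsLUnit {X : Type*} (R : X → X → X → Prop) (e : X) : Prop :=
  (∃ x, R x e x) ∧ ∀ x y, R y e x → y = x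

/-- Relational right unit. -/
def IsRUnit {X : Type*} (R : X → X → X → Prop) (e : X) : Prop :=
  (∃ x, R x x e) ∧ ∀ x y, R y x e → y = x

/-- Relational unit: a left or a right unit. -/
def IsUnit' {X : Type*} (R : X → X → X → Prop) (e : X) : Prop :=
  IsLUnit R e ∨ IsRUnit R e

/-- Relational monoid: relationally associative, and every element has a left
unit composable on the left and a right unit composable on the right. -/
def RelMonoid {X : Type*} (R : X → X → X → Prop) : Prop :=
  RelAssoc R ∧ ∀ x, (∃ e, IsLUnit R e ∧ D R e x) ∧ (∃ e, IsRUnit R e ∧ D R x e)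

/-- Coherence. -/
def Coherent {X : Type*} (R : X → X → X → Prop) : Prop :=
  ∀ v x y z, R v x y → D R y z → D R v z

/-- Weak functionality: `R` is a partial operation. -/
def WFun {X : Type*} (R : X → X → X → Prop) : Prop :=
  ∀ x x' y z, R x y z → R x' y z → x = x'

/-- In a relational monoid, every one-sided unit is two-sided. -/
lemma unit_two_sided {X : Type*} {R : X → X → X → Prop} (hM : RelMonoid R) {e : X}
    (he : IsUnit' R e) : IsLUnit R e ∧ IsRUnit R e := by
  rcases he with he | he
  · refine ⟨he, ?_⟩
    obtain ⟨r, hr, z, hz⟩ := (hM.2 e).2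
    -- hz : R z e r; r is a right unit so z = e
    have hze : z = e := hr.2 _ _ hz
    have hz' : R e e r := hze ▸ hz
    -- e is a left unit so e = r
    have her : e = r := he.2 r e hz'
    exact her ▸ hr
  · refine ⟨?_, he⟩
    obtain ⟨g, hg, z, hz⟩ := (hM.2 e).1
    -- hz : R z g e; g is a left unit so z = e
    have hze : z = e := hg.2 _ _ hz
    have hz' : R e g e := hze ▸ hz
    -- e is a right unit so e = g
    have heg : e = g := he.2 g e hz'
    exact heg ▸ hg

/-- A left unit and a right unit acting (from the right) on the same element coincide. -/
lemma unit_unique_lr {X : Type*} {R : X → X → X → Prop} (hA : RelAssoc R) {a e e' : X}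
    (heL : IsLUnit R e) (he'R : IsRUnit R e') (h1 : R a e a) (h2 : R a e' a) : e = e' := by
  obtain ⟨s, hs1, hs2⟩ := (hA a e e' a).1 ⟨a, h1, h2⟩
  -- hs2 : R s e e'; e left unit gives s = e'
  have hse : s = e' := heL.2 e' s hs2
  have hs2' : R e' e e' := hse ▸ hs2
  -- e' right unit gives e' = e
  exact (he'R.2 e e' hs2').symm

/-- Uniqueness of units acting on a given element. -/
lemma unit_unique {X : Type*} {R : X → X → X → Prop} (hM : RelMonoid R) {a e e' : X}
    (he : IsUnit' R e) (he' : IsUnit' R e') (h1 : R a e a) (h2 : R a e' a) : e = e' :=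
  unit_unique_lr hM.1 (unit_two_sided hM he).1 (unit_two_sided hM he').2 h1 h2

theorem stmt6 {X : Type*} (R : X → X → X → Prop) (hM : RelMonoid R)
    (l r : X → X)
    (hl : ∀ x, IsUnit' R (l x) ∧ R x (l x) x)
    (hr : ∀ x, IsUnit' R (r x) ∧ R x x (r x)) :
    ∀ v w x y : X, R v x y → R w x (l y) → l v = l w := by
  intro v w x y hv hw
  have hlxL : IsLUnit R (l x) := (unit_two_sided hM (hl x).1).1
  have hxx : R x (l x) x := (hl x).2
  -- R v (l x) v
  obtain ⟨t, ht1, ht2⟩ := (hM.1 v (l x) x y).2 ⟨x, hv, hxx⟩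
  have hvt : v = t := hlxL.2 t v ht1
  subst hvt
  -- ht1 : R v (l x) v
  obtain ⟨s, hs1, hs2⟩ := (hM.1 w (l x) x (l y)).2 ⟨x, hw, hxx⟩
  have hws : w = s := hlxL.2 s w hs1
  subst hws
  -- hs1 : R w (l x) w
  have h1 : l v = l x := unit_unique hM (hl v).1 (hl x).1 (hl v).2 ht1
  have h2 : l w = l x := unit_unique hM (hl w).1 (hl x).1 (hl w).2 hs1
  rw [h1, h2]
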